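/- Let p be a prime with p > 3. Then W_p ≡ 1/p − B_{p−1}/(p−1) + B_{2p−2}/(2p−2) − (p/2)·(B_{p−1}/(p−1))² (mod p²) as rational numbers. -/

import Mathlib

open Finset

/-- `x ≡ y (mod p^k)` for rationals: `x - y = p^k * (c/d)` with `p ∤ d`. -/
def ratCongr (p k : ℕ) (x y : ℚ) : Prop :=
  ∃ c d : ℤ, ¬ (p : ℤ) ∣ d ∧ x - y = (p : ℚ) ^ k * ((c : ℚ) / (d : ℚ))

/-- The Wilson quotient `W_p = ((p-1)! + 1)/p` (an integer by Wilson's theorem). -/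
def wilsonQuotient (p : ℕ) : ℤ := ((Nat.factorial (p - 1) : ℤ) + 1) / p

/-- The Fermat quotient `q_p(a) = (a^(p-1) - 1)/p` (an integer for `p ∤ a`). -/
def fermatQuotient (p a : ℕ) : ℤ := ((a : ℤ) ^ (p - 1) - 1) / p

/-- A prime `p` is a Wilson prime if `p ∣ W_p`. -/
def IsWilsonPrime (p : ℕ) : Prop := (p : ℤ) ∣ wilsonQuotient p

/-- A prime `p` is a Lerch prime if `∑_{a=1}^{p-1} q_p(a) ≡ W_p (mod p²)`. -/
def IsLerchPrime (p : ℕ) : Prop :=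
  (p : ℤ) ^ 2 ∣ (∑ a ∈ Icc 1 (p - 1), fermatQuotient p a) - wilsonQuotient p

/-- The harmonic number `H_a = ∑_{k=1}^{a} 1/k`. -/
def harmonicNum (a : ℕ) : ℚ := ∑ k ∈ Icc 1 a, (1 : ℚ) / k

/-- The generalized harmonic number `H_{a,2} = ∑_{k=1}^{a} 1/k²`. -/
def harmonicNum2 (a : ℕ) : ℚ := ∑ k ∈ Icc 1 a, (1 : ℚ) / (k : ℚ) ^ 2

/-- p-integral rationals: denominators prime to `p`. -/
def PI (p : ℕ) (x : ℚ) : Prop := ∃ c d : ℤ, ¬ (p : ℤ) ∣ d ∧ x = (c : ℚ) / (d : ℚ)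

section PIlem
variable {p : ℕ}

lemma pi_div_int (c d : ℤ) (h : ¬ (p:ℤ) ∣ d) : PI p ((c:ℚ)/(d:ℚ)) := ⟨c, d, h, rfl⟩

lemma not_dvd_one' (hp : p.Prime) : ¬ (p:ℤ) ∣ (1:ℤ) := (Nat.prime_iff_prime_int.mp hp).not_dvd_one

lemma pi_intCast (hp : p.Prime) (n : ℤ) : PI p (n:ℚ) := ⟨n, 1, not_dvd_one' hp, by simp⟩

lemma pi_natCast (hp : p.Prime) (n : ℕ) : PI p (n:ℚ) := by exact_mod_cast pi_intCast hp (n:ℤ)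

lemma dne {d : ℤ} (h : ¬ (p:ℤ) ∣ d) : (d:ℚ) ≠ 0 := by
  intro h0
  have : d = 0 := by exact_mod_cast h0
  exact h (this ▸ dvd_zero _)

lemma pi_add (hp : p.Prime) {x y : ℚ} (hx : PI p x) (hy : PI p y) : PI p (x + y) := by
  obtain ⟨c1, d1, h1, rfl⟩ := hx
  obtain ⟨c2, d2, h2, rfl⟩ := hy
  refine ⟨c1 * d2 + c2 * d1, d1 * d2, fun h => ?_, ?_⟩
  · rcases (Nat.prime_iff_prime_int.mp hp).dvd_mul.mp h with h | h
    exacts [h1 h, h2 h]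
  · push_cast
    rw [div_add_div _ _ (dne h1) (dne h2)]; ring

lemma pi_mul (hp : p.Prime) {x y : ℚ} (hx : PI p x) (hy : PI p y) : PI p (x * y) := by
  obtain ⟨c1, d1, h1, rfl⟩ := hx
  obtain ⟨c2, d2, h2, rfl⟩ := hy
  refine ⟨c1 * c2, d1 * d2, fun h => ?_, ?_⟩
  · rcases (Nat.prime_iff_prime_int.mp hp).dvd_mul.mp h with h | h
    exacts [h1 h, h2 h]
  · push_cast
    rw [div_mul_div_comm]

lemma pi_neg {x : ℚ} (hx : PI p x) : PI p (-x) := by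
  obtain ⟨c, d, h, rfl⟩ := hx
  exact ⟨-c, d, h, by push_cast; ring⟩

lemma pi_sub (hp : p.Prime) {x y : ℚ} (hx : PI p x) (hy : PI p y) : PI p (x - y) := by
  rw [sub_eq_add_neg]; exact pi_add hp hx (pi_neg hy)

lemma pi_sum (hp : p.Prime) {s : Finset ℕ} {f : ℕ → ℚ} (h : ∀ i ∈ s, PI p (f i)) :
    PI p (∑ i ∈ s, f i) := by
  classical
  induction s using Finset.cons_induction with
  | empty => simpa using pi_intCast hp 0
  | cons a s ha ih =>
    rw [Finset.sum_cons]
    exact pi_add hp (h a (Finset.mem_cons_self a s)) (ih fun i hi => h i (Finset.mem_cons_of_mem hi))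

lemma pi_pow (hp : p.Prime) {x : ℚ} (hx : PI p x) (n : ℕ) : PI p (x ^ n) := by
  induction n with
  | zero => simpa using pi_intCast hp 1
  | succ n ih => rw [pow_succ]; exact pi_mul hp ih hx
end PIlem

-- L1: sum of k-th powers over range p is divisible by p when (p-1) ∤ k, k ≠ 0
lemma sum_pow_dvd {p : ℕ} (hp : p.Prime) {k : ℕ} (hk : k ≠ 0) (h : ¬ (p - 1) ∣ k) :
    (p:ℤ) ∣ ∑ a ∈ range p, (a:ℤ) ^ k := by
  haveI : Fact p.Prime := ⟨hp⟩
  rw [← ZMod.intCast_zmod_eq_zero_iff_dvd]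
  push_cast
  have h1 : ∑ a ∈ range p, (a : ZMod p) ^ k = ∑ x : ZMod p, x ^ k := by
    refine Finset.sum_bij' (fun a _ => (a : ZMod p)) (fun x _ => x.val) ?_ ?_ ?_ ?_ ?_
    · intro a _; exact Finset.mem_univ _
    · intro x _; exact Finset.mem_range.mpr (ZMod.val_lt x)
    · intro a ha; exact ZMod.val_natCast_of_lt (Finset.mem_range.mp ha)
    · intro x _; exact ZMod.natCast_zmod_val x
    · intro a _; rfl
  rw [h1]
  classical
  have h2 : ∑ x : ZMod p, x ^ k = ∑ x : (ZMod p)ˣ, ((x : ZMod p)) ^ k := by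
    let φ : (ZMod p)ˣ ↪ ZMod p := ⟨fun x => x, Units.val_injective⟩
    have huniv : univ.map φ = univ \ {0} := by
      ext x
      simpa only [mem_map, mem_univ, Function.Embedding.coeFn_mk, true_and, mem_sdiff,
        mem_singleton, φ] using
          (show (∃ a : (ZMod p)ˣ, (a : ZMod p) = x) ↔ x ≠ 0 from isUnit_iff_ne_zero)
    calc
      ∑ x : ZMod p, x ^ k = ∑ x ∈ univ \ {(0 : ZMod p)}, x ^ k := by
        rw [← sum_sdiff ({0} : Finset (ZMod p)).subset_univ, sum_singleton, zero_pow hk, add_zero]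
      _ = ∑ x : (ZMod p)ˣ, ((x : ZMod p)) ^ k := by simp [φ, ← huniv, univ.sum_map φ]
  rw [h2]
  have h3 := FiniteField.sum_pow_units (ZMod p) k
  rw [ZMod.card] at h3
  rw [h3, if_neg h]

section main
variable {p : ℕ}

lemma pi_div_nat (hp : p.Prime) {x : ℚ} (hx : PI p x) {m : ℕ} (hm : ¬ p ∣ m) :
    PI p (x / m) := by
  have h1 : PI p (((1:ℤ):ℚ)/((m:ℤ):ℚ)) := pi_div_int 1 m (by exact_mod_cast hm)
  have : x / m = x * (((1:ℤ):ℚ)/((m:ℤ):ℚ)) := by push_cast; ring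
  rw [this]; exact pi_mul hp hx h1

lemma pi_sum_int (hp : p.Prime) {f : ℕ → ℤ} (s : Finset ℕ) :
    PI p ((∑ a ∈ s, f a : ℤ) : ℚ) := pi_intCast hp _

lemma not_dvd_small (hp5 : 5 ≤ p) {m : ℕ} (h0 : 0 < m) (h1 : m < 2*p) (h2 : m ≠ p) :
    ¬ p ∣ m := by
  rintro ⟨t, rfl⟩
  rcases Nat.lt_or_ge t 2 with h | h
  · interval_cases t <;> omega
  · have : p*2 ≤ p*t := Nat.mul_le_mul_left p h
    omega

lemma bernoulli_odd_zero {k : ℕ} (hk : Odd k) (h1 : 1 < k) : bernoulli k = 0 := by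
  rw [bernoulli_eq_bernoulli'_of_ne_one (by omega)]
  exact bernoulli'_eq_zero_of_odd hk h1

lemma bern_pint (hp : p.Prime) (hp5 : 5 ≤ p) :
    ∀ k, k ≤ 2*p - 4 → (PI p ((p:ℚ) * bernoulli k) ∧ (k ≠ p - 1 → PI p (bernoulli k))) := by
  intro k
  induction k using Nat.strong_induction_on with
  | _ k ih =>
    intro hk
    -- reduce: it suffices to handle `PI p (bernoulli k)` when k ≠ p-1 etc.
    rcases Nat.lt_or_ge k 2 with hk2 | hk2
    · interval_cases k
      · constructor
        · rw [bernoulli_zero, mul_one]; exact pi_natCast hp p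
        · intro _; rw [bernoulli_zero]; exact_mod_cast pi_intCast hp 1
      · have hb : bernoulli 1 = ((-1:ℤ):ℚ)/((2:ℤ):ℚ) := by rw [bernoulli_one]; norm_num
        have hpi : PI p (bernoulli 1) := hb ▸ pi_div_int (-1) 2
          (by intro h; have := Int.le_of_dvd (by norm_num) h; omega)
        exact ⟨pi_mul hp (pi_natCast hp p) hpi, fun _ => hpi⟩
    rcases Nat.even_or_odd k with hke | hko
    swap
    · have hb : bernoulli k = 0 := bernoulli_odd_zero hko (by omega)
      rw [hb]
      have h0 : PI p (0:ℚ) := by exact_mod_cast pi_intCast hp 0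
      exact ⟨by rw [mul_zero]; exact h0, fun _ => h0⟩
    -- main case : k even, 2 ≤ k ≤ 2p-4
    have hF := _root_.sum_range_pow p k
    rw [Finset.sum_range_succ] at hF
    have hne : ((k:ℚ) + 1) ≠ 0 := by positivity
    have hfk : bernoulli k * ((k + 1).choose k) * (p:ℚ) ^ (k + 1 - k) / (k+1)
        = (p:ℚ) * bernoulli k := by
      rw [show k + 1 - k = 1 by omega, Nat.choose_succ_self_right]
      push_cast
      field_simp
    rw [hfk] at hF
    -- hF : ∑ a in range p, a^k = tail + p * B k
    by_cases hkp : k = p - 1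
    · -- show PI (p * B k) directly
      subst hkp
      have hc : ((∑ a ∈ range p, (a:ℤ)^(p-1) : ℤ):ℚ) = ∑ a ∈ range p, (a:ℚ)^(p-1) := by
        push_cast; rfl
      have hMain : (p:ℚ) * bernoulli (p-1)
          = ((∑ a ∈ range p, (a:ℤ)^(p-1) : ℤ) : ℚ)
            - ∑ i ∈ range (p-1), bernoulli i * ((p-1+1).choose i) * (p:ℚ) ^ (p-1+1-i) / (((p-1:ℕ):ℚ)+1) := by
        rw [hc]; linarith [hF]
      have hpB : PI p ((p:ℚ) * bernoulli (p-1)) := by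
        rw [hMain]
        refine pi_sub hp (pi_intCast hp _) (pi_sum hp ?_)
        intro i hi
        rw [Finset.mem_range] at hi
        have hterm : bernoulli i * ((p-1+1).choose i) * (p:ℚ) ^ (p-1+1-i) / (((p-1:ℕ):ℚ)+1)
            = bernoulli i * ((p-1+1).choose i) * (p:ℚ) ^ (p-1-i) := by
          have hq : (((p-1:ℕ):ℚ)+1) = (p:ℚ) := by
            rw [Nat.cast_sub (by omega : 1 ≤ p)]; ring
          rw [hq, show p-1+1-i = (p-1-i)+1 by omega, pow_succ]
          have hpne : (p:ℚ) ≠ 0 := by positivity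
          field_simp
        rw [hterm]
        have hBi : PI p (bernoulli i) := (ih i (by omega) (by omega)).2 (by omega)
        exact pi_mul hp (pi_mul hp hBi (pi_natCast hp _)) (pi_pow hp (pi_natCast hp p) _)
      exact ⟨hpB, fun h => absurd rfl h⟩
    · -- k ≠ p-1 : show PI (B k)
      have hdvd : ¬ (p-1) ∣ k := by
        rintro ⟨t, rfl⟩
        rcases Nat.lt_or_ge t 2 with h | h
        · interval_cases t <;> omega
        · have : (p-1)*2 ≤ (p-1)*t := Nat.mul_le_mul_left _ h
          omega
      obtain ⟨m, hm⟩ := sum_pow_dvd hp (by omega) hdvd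
      have hBk : bernoulli k
          = (m:ℚ) - ∑ i ∈ range k, bernoulli i * ((k+1).choose i) * (p:ℚ) ^ (k-i) / (k+1) := by
        have hpne : (p:ℚ) ≠ 0 := by positivity
        apply mul_left_cancel₀ hpne
        have hcast : ((∑ a ∈ range p, (a:ℤ)^k : ℤ) : ℚ) = ∑ a ∈ range p, (a:ℚ)^k := by push_cast; rfl
        have hm' : (∑ a ∈ range p, (a:ℚ)^k) = (p:ℚ) * m := by
          rw [← hcast, hm]; push_cast; ring
        rw [mul_sub, Finset.mul_sum, ← hm', hF]
        have : ∀ i ∈ range k, (p:ℚ) * (bernoulli i * ((k+1).choose i) * (p:ℚ) ^ (k-i) / (k+1))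
            = bernoulli i * ((k+1).choose i) * (p:ℚ) ^ (k+1-i) / (k+1) := by
          intro i hi
          rw [Finset.mem_range] at hi
          rw [show k+1-i = (k-i)+1 by omega, pow_succ]
          ring
        rw [Finset.sum_congr rfl this]
        ring
      have hpi : PI p (bernoulli k) := by
        rw [hBk]
        refine pi_sub hp (pi_intCast hp m) (pi_sum hp ?_)
        intro i hi
        rw [Finset.mem_range] at hi
        have hk1 : ¬ p ∣ (k+1) := not_dvd_small hp5 (by omega) (by omega) (by omega)
        rw [show ((k:ℚ)+1) = ((k+1:ℕ):ℚ) by push_cast; ring]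
        refine pi_div_nat hp ?_ hk1
        rcases eq_or_ne i (p-1) with rfl | hip
        · have h1 : (p:ℚ) ^ (k-(p-1)) = (p:ℚ) * (p:ℚ) ^ (k-(p-1)-1) := by
            rw [← pow_succ']
            congr 1
            omega
          rw [h1]
          have hpB : PI p ((p:ℚ) * bernoulli (p-1)) := (ih (p-1) (by omega) (by omega)).1
          have : bernoulli (p-1) * ((k+1).choose (p-1)) * ((p:ℚ) * (p:ℚ)^(k-(p-1)-1))
              = ((p:ℚ) * bernoulli (p-1)) * ((k+1).choose (p-1)) * (p:ℚ)^(k-(p-1)-1) := by ring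
          rw [this]
          exact pi_mul hp (pi_mul hp hpB (pi_natCast hp _)) (pi_pow hp (pi_natCast hp p) _)
        · have hBi : PI p (bernoulli i) := (ih i (by omega) (by omega)).2 hip
          exact pi_mul hp (pi_mul hp hBi (pi_natCast hp _)) (pi_pow hp (pi_natCast hp p) _)
      exact ⟨pi_mul hp (pi_natCast hp p) hpi, fun _ => hpi⟩
end main

section faul
variable {p : ℕ}

lemma faulhaber1 (hp : p.Prime) (hp5 : 5 ≤ p) :
    PI p ((((∑ a ∈ range p, (a:ℤ)^(p-1) : ℤ)):ℚ) / (p:ℚ)^3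
      - (p:ℚ) * bernoulli (p-1) / (p:ℚ)^3) := by
  have hpne : (p:ℚ) ≠ 0 := by positivity
  have hodd : Odd p := hp.odd_of_ne_two (by omega)
  have hF := _root_.sum_range_pow p (p-1)
  have hc : ((∑ a ∈ range p, (a:ℤ)^(p-1) : ℤ):ℚ) = ∑ a ∈ range p, (a:ℚ)^(p-1) := by
    push_cast; rfl
  rw [Finset.sum_range_succ] at hF
  rw [show p - 1 = (p-2) + 1 by omega] at hF
  rw [Finset.sum_range_succ] at hF
  rw [show (p-2) + 1 = p - 1 by omega] at hF
  -- term at p-1 equals p * B (p-1); term at p-2 is zero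
  have hq : ((p-1:ℕ):ℚ) + 1 = (p:ℚ) := by
    rw [Nat.cast_sub (by omega : 1 ≤ p)]; ring
  have ht1 : bernoulli (p-1) * ((p-1+1).choose (p-1)) * (p:ℚ) ^ (p-1+1-(p-1)) / (((p-1:ℕ):ℚ)+1)
      = (p:ℚ) * bernoulli (p-1) := by
    rw [hq, show p-1+1-(p-1) = 1 by omega, Nat.choose_succ_self_right, pow_one,
      show ((p-1+1:ℕ):ℚ) = (p:ℚ) by rw [show p-1+1 = p by omega]]
    field_simp
  have ht2 : bernoulli (p-2) = 0 :=
    bernoulli_odd_zero (by rcases hodd with ⟨j, hj⟩; exact ⟨j - 1, by omega⟩) (by omega)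
  rw [ht1, ht2] at hF
  simp only [zero_mul, zero_div, add_zero] at hF
  -- hF : S1q = tail + p * B(p-1)
  have key : (((∑ a ∈ range p, (a:ℤ)^(p-1) : ℤ)):ℚ) / (p:ℚ)^3 - (p:ℚ) * bernoulli (p-1) / (p:ℚ)^3
      = ∑ i ∈ range (p-2),
          bernoulli i * ((p-1+1).choose i) * (p:ℚ) ^ (p-1+1-i) / (((p-1:ℕ):ℚ)+1) / (p:ℚ)^3 := by
    rw [hc, hF, add_div, add_sub_cancel_right, Finset.sum_div]
  rw [key]
  refine pi_sum hp ?_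
  intro i hi
  rw [Finset.mem_range] at hi
  rcases Nat.eq_zero_or_pos i with rfl | hi0
  · have : bernoulli 0 * ((p-1+1).choose 0) * (p:ℚ) ^ (p-1+1-0) / (((p-1:ℕ):ℚ)+1) / (p:ℚ)^3
        = (p:ℚ) ^ (p-4) := by
      rw [hq, bernoulli_zero, Nat.choose_zero_right, show p-1+1-0 = (p-4)+4 by omega, pow_add]
      push_cast
      field_simp
    rw [this]
    exact pi_pow hp (pi_natCast hp p) _
  · obtain ⟨c, hcc⟩ : p ∣ (p-1+1).choose i := by
      rw [show p-1+1 = p by omega]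
      exact hp.dvd_choose_self (by omega) (by omega)
    have : bernoulli i * ((p-1+1).choose i) * (p:ℚ) ^ (p-1+1-i) / (((p-1:ℕ):ℚ)+1) / (p:ℚ)^3
        = bernoulli i * (c:ℚ) * (p:ℚ) ^ (p-3-i) := by
      rw [hq, hcc, show p-1+1-i = (p-3-i)+3 by omega, pow_add]
      push_cast
      field_simp
    rw [this]
    have hBi : PI p (bernoulli i) := (bern_pint hp hp5 i (by omega)).2 (by omega)
    exact pi_mul hp (pi_mul hp hBi (pi_natCast hp c)) (pi_pow hp (pi_natCast hp p) _)

lemma faulhaber2 (hp : p.Prime) (hp5 : 5 ≤ p) :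
    PI p ((((∑ a ∈ range p, (a:ℤ)^(2*p-2) : ℤ)):ℚ) / (p:ℚ)^3
      - (p:ℚ) * bernoulli (2*p-2) / (p:ℚ)^3) := by
  have hpne : (p:ℚ) ≠ 0 := by positivity
  have hF := _root_.sum_range_pow p (2*p-2)
  have hc : ((∑ a ∈ range p, (a:ℤ)^(2*p-2) : ℤ):ℚ) = ∑ a ∈ range p, (a:ℚ)^(2*p-2) := by
    push_cast; rfl
  rw [Finset.sum_range_succ] at hF
  rw [show 2*p - 2 = (2*p-3) + 1 by omega] at hF
  rw [Finset.sum_range_succ] at hF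
  rw [show (2*p-3) + 1 = 2*p - 2 by omega] at hF
  have hq : ((2*p-2:ℕ):ℚ) + 1 = ((2*p-1:ℕ):ℚ) := by
    rw [Nat.cast_sub (by omega : 2 ≤ 2*p), Nat.cast_sub (by omega : 1 ≤ 2*p)]
    push_cast; ring
  have h2p1 : ((2*p-1:ℕ):ℚ) ≠ 0 := by
    rw [Nat.cast_ne_zero]; omega
  have ht1 : bernoulli (2*p-2) * ((2*p-2+1).choose (2*p-2)) * (p:ℚ) ^ (2*p-2+1-(2*p-2)) / (((2*p-2:ℕ):ℚ)+1)
      = (p:ℚ) * bernoulli (2*p-2) := by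
    rw [hq, show 2*p-2+1-(2*p-2) = 1 by omega, Nat.choose_succ_self_right, pow_one,
      show ((2*p-2+1 : ℕ):ℚ) = ((2*p-1:ℕ):ℚ) by rw [show 2*p-2+1 = 2*p-1 by omega]]
    rw [mul_right_comm, mul_div_cancel_right₀ _ h2p1]
    ring
  have ht2 : bernoulli (2*p-3) = 0 :=
    bernoulli_odd_zero ⟨p - 2, by omega⟩ (by omega)
  rw [ht1, ht2] at hF
  simp only [zero_mul, zero_div, add_zero] at hF
  have key : (((∑ a ∈ range p, (a:ℤ)^(2*p-2) : ℤ)):ℚ) / (p:ℚ)^3 - (p:ℚ) * bernoulli (2*p-2) / (p:ℚ)^3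
      = ∑ i ∈ range (2*p-3),
          bernoulli i * ((2*p-2+1).choose i) * (p:ℚ) ^ (2*p-2+1-i) / (((2*p-2:ℕ):ℚ)+1) / (p:ℚ)^3 := by
    rw [hc, hF, add_div, add_sub_cancel_right, Finset.sum_div]
  rw [key]
  refine pi_sum hp ?_
  intro i hi
  rw [Finset.mem_range] at hi
  have hnd : ¬ p ∣ (2*p-1) := not_dvd_small hp5 (by omega) (by omega) (by omega)
  rcases eq_or_ne i (p-1) with rfl | hip
  · have : bernoulli (p-1) * ((2*p-2+1).choose (p-1)) * (p:ℚ) ^ (2*p-2+1-(p-1)) / (((2*p-2:ℕ):ℚ)+1) / (p:ℚ)^3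
        = ((p:ℚ) * bernoulli (p-1)) * ((2*p-2+1).choose (p-1)) * (p:ℚ) ^ (p-4) / ((2*p-1:ℕ):ℚ) := by
      rw [hq, show 2*p-2+1-(p-1) = (p-4)+4 by omega, pow_add, div_div,
        div_eq_div_iff (mul_ne_zero h2p1 (pow_ne_zero 3 hpne)) h2p1]
      ring
    rw [this]
    have hpB : PI p ((p:ℚ) * bernoulli (p-1)) := (bern_pint hp hp5 (p-1) (by omega)).1
    refine pi_div_nat hp ?_ hnd
    exact pi_mul hp (pi_mul hp hpB (pi_natCast hp _)) (pi_pow hp (pi_natCast hp p) _)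
  · have : bernoulli i * ((2*p-2+1).choose i) * (p:ℚ) ^ (2*p-2+1-i) / (((2*p-2:ℕ):ℚ)+1) / (p:ℚ)^3
        = (bernoulli i * ((2*p-2+1).choose i) * (p:ℚ) ^ (2*p-4-i)) / ((2*p-1:ℕ):ℚ) := by
      rw [hq, show 2*p-2+1-i = (2*p-4-i)+3 by omega, pow_add, div_div,
        div_eq_div_iff (mul_ne_zero h2p1 (pow_ne_zero 3 hpne)) h2p1]
      ring
    rw [this]
    have hBi : PI p (bernoulli i) := (bern_pint hp hp5 i (by omega)).2 hip
    refine pi_div_nat hp ?_ hnd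
    exact pi_mul hp (pi_mul hp hBi (pi_natCast hp _)) (pi_pow hp (pi_natCast hp p) _)
end faul

section intlem
variable {p : ℕ}

lemma wilson_exact (hp : p.Prime) : ((Nat.factorial (p-1) : ℤ) + 1) = p * wilsonQuotient p := by
  haveI : Fact p.Prime := ⟨hp⟩
  have hd : (p:ℤ) ∣ ((Nat.factorial (p-1) : ℤ) + 1) := by
    rw [← ZMod.intCast_zmod_eq_zero_iff_dvd]
    push_cast
    rw [ZMod.wilsons_lemma]
    ring
  rw [wilsonQuotient, Int.mul_ediv_cancel' hd]

lemma fermat_exact (hp : p.Prime) {a : ℕ} (ha : a ∈ Icc 1 (p-1)) :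
    (a:ℤ)^(p-1) - 1 = p * fermatQuotient p a := by
  haveI : Fact p.Prime := ⟨hp⟩
  rw [Finset.mem_Icc] at ha
  have hp2 := hp.two_le
  have hnd : ¬ (p ∣ a) := by
    intro h
    have := Nat.le_of_dvd (by omega) h
    omega
  have ha0 : (a : ZMod p) ≠ 0 := by
    rw [Ne, ZMod.natCast_eq_zero_iff]
    exact hnd
  have hd : (p:ℤ) ∣ ((a:ℤ)^(p-1) - 1) := by
    rw [← ZMod.intCast_zmod_eq_zero_iff_dvd]
    push_cast
    rw [ZMod.pow_card_sub_one_eq_one ha0]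
    ring
  rw [fermatQuotient, Int.mul_ediv_cancel' hd]

-- product expansion
lemma prod_expand (P : ℤ) (x : ℕ → ℤ) (s : Finset ℕ) :
    ∃ e t : ℤ, ∏ a ∈ s, (1 + P * x a)
      = 1 + P * (∑ a ∈ s, x a) + P^2 * e + P^3 * t
      ∧ 2 * e = (∑ a ∈ s, x a)^2 - ∑ a ∈ s, (x a)^2 := by
  classical
  induction s using Finset.cons_induction with
  | empty => exact ⟨0, 0, by simp, by simp⟩
  | cons a s ha ih =>
    obtain ⟨e, t, h1, h2⟩ := ih
    refine ⟨e + x a * (∑ b ∈ s, x b), t + x a * e + P * (x a * t), ?_, ?_⟩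
    · rw [Finset.prod_cons, Finset.sum_cons, h1]
      ring
    · rw [Finset.sum_cons, Finset.sum_cons]
      linear_combination h2
-- binomial
lemma binom_expand {n : ℕ} (hn : 3 ≤ n) (P a : ℤ) :
    ∃ s : ℤ, (1 + P * a)^n = 1 + n * (P * a) + (n.choose 2) * (P*a)^2 + P^3 * s := by
  have h := add_pow (P * a) 1 n
  simp only [one_pow, mul_one] at h
  have hsplit : ∑ k ∈ range (n+1), (P*a)^k * (n.choose k : ℤ)
      = (∑ k ∈ range 3, (P*a)^k * (n.choose k : ℤ))
        + ∑ k ∈ Ico 3 (n+1), (P*a)^k * (n.choose k : ℤ) := by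
    rw [Finset.range_eq_Ico, ← Finset.sum_Ico_consecutive _ (by omega : 0 ≤ 3) (by omega : 3 ≤ n+1), Finset.range_eq_Ico]
  have hdvd : P^3 ∣ ∑ k ∈ Ico 3 (n+1), (P*a)^k * (n.choose k : ℤ) := by
    refine Finset.dvd_sum ?_
    intro k hk
    rw [Finset.mem_Ico] at hk
    rw [show k = 3 + (k - 3) by omega, pow_add]
    exact Dvd.dvd.mul_right (Dvd.dvd.mul_right ⟨a^3, by ring⟩ _) _
  obtain ⟨s, hs⟩ := hdvd
  refine ⟨s, ?_⟩
  rw [show (1 + P * a) = (P * a + 1) by ring, h, hsplit, hs]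
  rw [Finset.sum_range_succ, Finset.sum_range_succ, Finset.sum_range_one]
  simp [Nat.choose_one_right]
  ring
end intlem

section keyint
variable {p : ℕ}

lemma key_int (hp : p.Prime) (hp5 : 5 ≤ p) :
    ∃ M : ℤ,
      2*((p:ℤ)-1)^2*((p:ℤ)*(wilsonQuotient p)-1)
        + 2*((p:ℤ)-1)*(∑ a ∈ Icc 1 (p-1), (a:ℤ)^(p-1))
        - ((p:ℤ)-1)*(∑ a ∈ Icc 1 (p-1), (a:ℤ)^(2*p-2))
        + (∑ a ∈ Icc 1 (p-1), (a:ℤ)^(p-1))^2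
      = (p:ℤ)^3 * M := by
  set W := wilsonQuotient p with hWdef
  set q := fermatQuotient p with hqdef
  set Q := ∑ a ∈ Icc 1 (p-1), q a with hQdef
  set Q2 := ∑ a ∈ Icc 1 (p-1), (q a)^2 with hQ2def
  have hpne : (p:ℤ) ≠ 0 := by exact_mod_cast hp.ne_zero
  have hcard : ((Icc 1 (p-1)).card : ℤ) = (p:ℤ) - 1 := by
    rw [Nat.card_Icc]
    push_cast [Nat.cast_sub (by omega : 1 ≤ p)]
    ring
  -- S1 = pQ + (p-1)
  have hS1 : (∑ a ∈ Icc 1 (p-1), (a:ℤ)^(p-1)) = (p:ℤ)*Q + ((p:ℤ)-1) := by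
    have : ∀ a ∈ Icc 1 (p-1), (a:ℤ)^(p-1) = 1 + (p:ℤ) * q a := by
      intro a ha
      have := fermat_exact hp ha
      linarith [this]
    rw [Finset.sum_congr rfl this, Finset.sum_add_distrib, Finset.sum_const, ← Finset.mul_sum,
      ← hQdef]
    simp only [nsmul_eq_mul]
    rw [hcard]
    ring
  -- S2 = p²Q2 + 2pQ + (p-1)
  have hS2 : (∑ a ∈ Icc 1 (p-1), (a:ℤ)^(2*p-2)) = (p:ℤ)^2*Q2 + 2*(p:ℤ)*Q + ((p:ℤ)-1) := by
    have h1 : ∀ a ∈ Icc 1 (p-1), (a:ℤ)^(2*p-2) = (p:ℤ)^2 * (q a)^2 + 2*(p:ℤ)*(q a) + 1 := by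
      intro a ha
      have hf := fermat_exact hp ha
      have : (a:ℤ)^(2*p-2) = ((a:ℤ)^(p-1))^2 := by
        rw [← pow_mul, show (p-1)*2 = 2*p-2 by omega]
      rw [this]
      linear_combination ((a:ℤ)^(p-1) + 1 + (p:ℤ) * q a) * hf
    rw [Finset.sum_congr rfl h1, Finset.sum_add_distrib, Finset.sum_add_distrib,
      Finset.sum_const, ← Finset.mul_sum, ← Finset.mul_sum, ← hQdef, ← hQ2def]
    rw [nsmul_eq_mul, hcard]
    ring
  -- product expansion applied
  obtain ⟨e, t, hprod, h2e⟩ := prod_expand (p:ℤ) q (Icc 1 (p-1))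
  rw [← hQdef] at hprod h2e
  have hQ2' : (∑ a ∈ Icc 1 (p-1), (q a)^2) = Q2 := hQ2def.symm
  rw [hQ2'] at h2e
  -- product equals factorial power
  have hfac : ∏ a ∈ Icc 1 (p-1), (1 + (p:ℤ) * q a) = ((Nat.factorial (p-1) : ℤ))^(p-1) := by
    have h1 : ∀ a ∈ Icc 1 (p-1), (1 + (p:ℤ) * q a) = (a:ℤ)^(p-1) := by
      intro a ha
      have := fermat_exact hp ha
      linarith [this]
    rw [Finset.prod_congr rfl h1, Finset.prod_pow]
    congr 1
    rw [← Nat.cast_prod]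
    congr 1
    rw [← Finset.Ico_add_one_right_eq_Icc]
    exact Finset.prod_Ico_id_eq_factorial (p-1)
  -- factorial = pW - 1
  have hW : ((Nat.factorial (p-1) : ℤ)) = (p:ℤ)*W - 1 := by
    have := wilson_exact hp
    rw [← hWdef] at this
    linarith
  -- binomial expansion
  obtain ⟨s, hbin⟩ := binom_expand (n := p-1) (by omega) (p:ℤ) (-W)
  -- even power
  have heven : Even (p-1) := by
    have : Odd p := hp.odd_of_ne_two (by omega)
    rcases this with ⟨j, hj⟩
    exact ⟨j, by omega⟩
  have hfac2 : ((Nat.factorial (p-1) : ℤ))^(p-1) = (1 + (p:ℤ)*(-W))^(p-1) := by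
    rw [hW, show (p:ℤ)*W - 1 = -(1 + (p:ℤ)*(-W)) by ring, heven.neg_pow]
  -- combine: hA
  have hA : 1 + (p:ℤ)*Q + (p:ℤ)^2*e + (p:ℤ)^3*t
      = 1 + ((p-1:ℕ):ℤ) * ((p:ℤ) * (-W)) + (((p-1).choose 2 : ℕ):ℤ) * ((p:ℤ)*(-W))^2 + (p:ℤ)^3*s := by
    rw [← hprod, hfac, hfac2, hbin]
  have hcast1 : ((p-1:ℕ):ℤ) = (p:ℤ) - 1 := by
    rw [Nat.cast_sub (by omega : 1 ≤ p)]; push_cast; ring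
  rw [hcast1] at hA
  set C : ℤ := (((p-1).choose 2 : ℕ):ℤ) with hCdef
  -- divide by p
  have hB : Q + (p:ℤ)*e + (p:ℤ)^2*t = -((p:ℤ)-1)*W + C*(p:ℤ)*W^2 + (p:ℤ)^2*s := by
    apply mul_left_cancel₀ hpne
    linear_combination hA
  -- W ≡ Q mod p
  have hv : W = Q + (p:ℤ) * (e + (p:ℤ)*t + W - C*W^2 - (p:ℤ)*s) := by
    linear_combination -hB
  set v : ℤ := e + (p:ℤ)*t + W - C*W^2 - (p:ℤ)*s with hvdef
  -- choose identity
  have hc : 2*C = ((p:ℤ)-1)*((p:ℤ)-2) := by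
    rw [hCdef]
    have hnat : 2 * ((p-1).choose 2) = (p-1) * (p-2) := by
      rw [Nat.choose_two_right]
      have hdvd : 2 ∣ (p-1) * ((p-1) - 1) := by
        rcases Nat.even_or_odd (p-1) with h | h
        · exact Dvd.dvd.mul_right h.two_dvd _
        · refine Dvd.dvd.mul_left ?_ _
          rcases h with ⟨j, hj⟩
          exact ⟨j, by omega⟩
      rw [Nat.mul_div_cancel' hdvd]
      congr 1
    have := congrArg (fun n : ℕ => (n : ℤ)) hnat
    push_cast [Nat.cast_sub (by omega : 1 ≤ p), Nat.cast_sub (by omega : 2 ≤ p)] at this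
    linarith
  refine ⟨2*t - 2*s + 2*W - Q2 - ((p:ℤ)-3)*W^2 - 4*Q*v - 2*(p:ℤ)*v^2 - 2*v, ?_⟩
  linear_combination (2*((p:ℤ)-1) + (∑ a ∈ Icc 1 (p-1), (a:ℤ)^(p-1)) + (p:ℤ)*Q + ((p:ℤ)-1)) * hS1
    - ((p:ℤ)-1) * hS2 - 2*(p:ℤ)*hB + (p:ℤ)^2*h2e - (p:ℤ)^2*W^2*hc
    - (2*(p:ℤ)^2*(W+Q+(p:ℤ)*v) + 2*(p:ℤ)^2)*hv
end keyint

section final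
variable {p : ℕ}

lemma sum_icc_range (hp5 : 5 ≤ p) {k : ℕ} (hk : k ≠ 0) :
    ∑ a ∈ range p, (a:ℤ)^k = ∑ a ∈ Icc 1 (p-1), (a:ℤ)^k := by
  rw [Finset.range_eq_Ico, Finset.sum_eq_sum_Ico_succ_bot (by omega : 0 < p)]
  rw [show ((0:ℕ):ℤ) = (0:ℤ) by norm_num, zero_pow hk, zero_add]
  congr 1


theorem stmt_15 (p : ℕ) (hp : p.Prime) (hp3 : 3 < p) :
    ratCongr p 2 ((wilsonQuotient p : ℚ))
      (1 / (p : ℚ) - bernoulli (p - 1) / ((p : ℚ) - 1)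
        + bernoulli (2 * p - 2) / (2 * (p : ℚ) - 2)
        - (p : ℚ) / 2 * (bernoulli (p - 1) / ((p : ℚ) - 1)) ^ 2) := by
  have hp5 : 5 ≤ p := by
    rcases Nat.lt_or_ge p 5 with h | h
    · interval_cases p <;> first | omega | (exfalso; revert hp; decide)
    · exact h
  have hpq : (p:ℚ) ≠ 0 := by positivity
  have hp1 : (p:ℚ) - 1 ≠ 0 := by
    have : (5:ℚ) ≤ (p:ℚ) := by exact_mod_cast hp5
    intro h; linarith
  obtain ⟨M, hM⟩ := key_int hp hp5
  rw [← sum_icc_range hp5 (by omega : p - 1 ≠ 0), ← sum_icc_range hp5 (by omega : 2*p-2 ≠ 0)] at hM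
  set W : ℤ := wilsonQuotient p with hW
  set S1 : ℤ := ∑ a ∈ range p, (a:ℤ)^(p-1) with hS1
  set S2 : ℤ := ∑ a ∈ range p, (a:ℤ)^(2*p-2) with hS2
  set β : ℚ := bernoulli (p-1) with hβ
  set γ : ℚ := bernoulli (2*p-2) with hγ
  have hMQ : 2*((p:ℚ)-1)^2*((p:ℚ)*(W:ℚ)-1) + 2*((p:ℚ)-1)*(S1:ℚ) - ((p:ℚ)-1)*(S2:ℚ)
      + (S1:ℚ)^2 = (p:ℚ)^3*(M:ℚ) := by exact_mod_cast hM
  set A1 : ℚ := (S1:ℚ)/(p:ℚ)^3 - (p:ℚ)*β/(p:ℚ)^3 with hA1def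
  set A2 : ℚ := (S2:ℚ)/(p:ℚ)^3 - (p:ℚ)*γ/(p:ℚ)^3 with hA2def
  have hA1 : PI p A1 := faulhaber1 hp hp5
  have hA2 : PI p A2 := faulhaber2 hp hp5
  set X : ℚ := ((M:ℚ) - 2*((p:ℚ)-1)*A1 + ((p:ℚ)-1)*A2 - A1*((p:ℚ)*β + (S1:ℚ)))
      * ((1:ℚ)/((2*((p:ℤ)-1)^2 : ℤ):ℚ)) with hXdef
  have hpInt : Prime (p:ℤ) := Nat.prime_iff_prime_int.mp hp
  have hp5' : (5:ℤ) ≤ (p:ℤ) := by exact_mod_cast hp5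
  have hpm1 : PI p ((p:ℚ)-1) := by
    have h := pi_intCast hp ((p:ℤ)-1)
    have heq : (((p:ℤ)-1 : ℤ):ℚ) = (p:ℚ)-1 := by push_cast; ring
    rwa [heq] at h
  have h2pi : PI p (2:ℚ) := by
    have h := pi_intCast hp 2
    have heq : (((2:ℤ)):ℚ) = (2:ℚ) := by norm_num
    rwa [heq] at h
  have hpβ : PI p ((p:ℚ)*β) := (bern_pint hp hp5 (p-1) (by omega)).1
  have hXpi : PI p X := by
    rw [hXdef]
    refine pi_mul hp ?_ (pi_div_int 1 _ ?_)
    · refine pi_sub hp (pi_add hp (pi_sub hp (pi_intCast hp M)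
        (pi_mul hp (pi_mul hp h2pi hpm1) hA1))
        (pi_mul hp hpm1 hA2))
        (pi_mul hp hA1 (pi_add hp hpβ (pi_intCast hp S1)))
    · intro h
      rcases hpInt.dvd_mul.mp h with h | h
      · have := Int.le_of_dvd (by norm_num) h
        omega
      · have h1 : (p:ℤ) ∣ ((p:ℤ)-1) := hpInt.dvd_of_dvd_pow h
        have h2 : (p:ℤ) ∣ 1 := by
          have : (p:ℤ) ∣ ((p:ℤ) - ((p:ℤ)-1)) := dvd_sub (dvd_refl _) h1
          simpa using this
        have := Int.le_of_dvd (by norm_num) h2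
        omega
  -- the algebraic identity
  have hfinal : ((W:ℚ) - (1 / (p : ℚ) - β / ((p : ℚ) - 1)
        + γ / (2 * (p : ℚ) - 2)
        - (p : ℚ) / 2 * (β / ((p : ℚ) - 1)) ^ 2)) = (p:ℚ)^2 * X := by
    rw [hXdef, hA1def, hA2def]
    have hc : ((2*((p:ℤ)-1)^2 : ℤ):ℚ) = 2*((p:ℚ)-1)^2 := by push_cast; ring
    rw [hc, show (2*(p:ℚ)-2) = 2*((p:ℚ)-1) by ring]
    field_simp
    linear_combination hMQ
  obtain ⟨c, d, hd, hcd⟩ := hXpi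
  refine ⟨c, d, hd, ?_⟩
  rw [hfinal, hcd]
end final
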